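/- arXiv:1010.6127 — 2 statements merged into one kernel-verified Lean document; each statement's English description precedes it below -/
import Mathlib

section
/- Consider a closed Hilbert complex segment (W0, W1, W2, d0, d1, V0, V1) with harmonic space H and graph norm ‖v‖_{V1} = (‖v‖² + ‖d1 v‖²)^{1/2}; let F : V1 → W1 be monotone and V-Lipschitz with constant C_F. Let W1h be a finite-dimensional real inner product space (inner product ⟨·,·⟩_h), i1 : W1h → W1 an injective bounded linear map with i1(W1h) ⊆ V1, i1* : W1 → W1h its adjoint (⟨i1* w, v⟩_h = ⟨w, i1 v⟩), J1 = i1* ∘ i1, and P_{V_h} : V1 → W1h the map such that i1(P_{V_h} v) is the orthogonal projection of v onto i1(W1h) with respect to the graph inner product ⟨u, v⟩ + ⟨d1 u, d1 v⟩ on V1. Let Π1 : W1 → W1h be a bounded linear map with Π1(i1 v) = v for all v ∈ W1h. If (σ, u, p) ∈ V0 × V1 × H solves the mixed semilinear problem with datum f ∈ W1, then ‖i1*(f − F(u + p)) − (Π1 f − Π1 F(i1 P_{V_h}(u + p)))‖_h ≤ C ( ‖id − J1‖ · ‖f − F(u + p)‖ + inf_{φ ∈ i1(W1h)} ‖(f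 − F(u + p)) − φ‖ + inf_{v ∈ i1(W1h)} ‖u − v‖_{V1} + inf_{q ∈ i1(W1h)} ‖p − q‖_{V1} ), where C depends only on the operator norms of i1 and Π1 and on C_F. -/
set_option maxHeartbeats 1000000
set_option synthInstance.maxHeartbeats 400000


open scoped RealInnerProductSpace


lemma l2_sqrt_triangle (x1 y1 x2 y2 : ℝ) :
    Real.sqrt ((x1 + x2) ^ 2 + (y1 + y2) ^ 2) ≤
      Real.sqrt (x1 ^ 2 + y1 ^ 2) + Real.sqrt (x2 ^ 2 + y2 ^ 2) := by
  set s := Real.sqrt (x1 ^ 2 + y1 ^ 2) with hs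
  set t := Real.sqrt (x2 ^ 2 + y2 ^ 2) with ht
  have hs0 : 0 ≤ s := Real.sqrt_nonneg _
  have ht0 : 0 ≤ t := Real.sqrt_nonneg _
  have hs2 : s ^ 2 = x1 ^ 2 + y1 ^ 2 := Real.sq_sqrt (by positivity)
  have ht2 : t ^ 2 = x2 ^ 2 + y2 ^ 2 := Real.sq_sqrt (by positivity)
  have hcross : x1 * x2 + y1 * y2 ≤ s * t := by
    nlinarith [sq_nonneg (x1 * y2 - x2 * y1), mul_nonneg hs0 ht0,
      sq_nonneg (s * t - (x1 * x2 + y1 * y2)), sq_nonneg (s * t + (x1 * x2 + y1 * y2))]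
  have h : (x1 + x2) ^ 2 + (y1 + y2) ^ 2 ≤ (s + t) ^ 2 := by nlinarith
  calc Real.sqrt ((x1 + x2) ^ 2 + (y1 + y2) ^ 2) ≤ Real.sqrt ((s + t) ^ 2) :=
        Real.sqrt_le_sqrt h
    _ = s + t := Real.sqrt_sq (by positivity)


section

variable {W0 W1 W2 : Type*}
  [NormedAddCommGroup W0] [InnerProductSpace ℝ W0] [CompleteSpace W0]
  [NormedAddCommGroup W1] [InnerProductSpace ℝ W1] [CompleteSpace W1]
  [NormedAddCommGroup W2] [InnerProductSpace ℝ W2] [CompleteSpace W2]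

/-- Membership in the harmonic space `H = {w ∈ V1 : d1 w = 0, w ⟂ d0(V0)}`. -/
def IsHarmonic (V0 : Submodule ℝ W0) {V1 : Submodule ℝ W1}
    (d0 : V0 →ₗ[ℝ] W1) (d1 : V1 →ₗ[ℝ] W2) (q : V1) : Prop :=
  d1 q = 0 ∧ ∀ τ : V0, ⟪(q : W1), d0 τ⟫ = 0

/-- The graph (V-)norm `‖v‖_{V1} = (‖v‖² + ‖d1 v‖²)^{1/2}` on the domain of `d1`. -/
noncomputable def graphNorm1 {V1 : Submodule ℝ W1} (d1 : V1 →ₗ[ℝ] W2) (v : V1) : ℝ :=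
  Real.sqrt (‖(v : W1)‖ ^ 2 + ‖d1 v‖ ^ 2)

/-- `(σ, u, p)` solves the mixed semilinear problem with nonlinearity `F` and
datum `f`. -/
def IsMixedSemilinearSolution (V0 : Submodule ℝ W0) {V1 : Submodule ℝ W1}
    (d0 : V0 →ₗ[ℝ] W1) (d1 : V1 →ₗ[ℝ] W2) (F : V1 → W1) (f : W1)
    (σ : V0) (u p : V1) : Prop :=
  IsHarmonic V0 d0 d1 p ∧
  (∀ τ : V0, ⟪(σ : W0), (τ : W0)⟫ - ⟪(u : W1), d0 τ⟫ = 0) ∧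
  (∀ v : V1, ⟪d0 σ, (v : W1)⟫ + ⟪d1 u, d1 v⟫ + ⟪(p : W1), (v : W1)⟫ +
      ⟪F (u + p), (v : W1)⟫ = ⟪f, (v : W1)⟫) ∧
  (∀ q : V1, IsHarmonic V0 d0 d1 q → ⟪(u : W1), (q : W1)⟫ = 0)

/-- **Estimate for the data-approximation term in the semilinear variational crimes
analysis** (Theorem 4.5 of the paper): choosing `f_h = Pi1 f` and
`F_h = Pi1 ∘ F ∘ i1` for any uniformly bounded linear projection `Pi1`, the
consistency term `‖i1*(f − F(u+p)) − (f_h − F_h(P_{V_h}(u+p)))‖_h` is controlled by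
the nonconformity `‖id − J1‖`, the best `W`-approximation of `f − F(u+p)`, and the
best `V`-approximations of `u` and `p`. -/
theorem semilinear_crimes_data_estimate
    (V0 : Submodule ℝ W0) (V1 : Submodule ℝ W1)
    (d0 : V0 →ₗ[ℝ] W1) (d1 : V1 →ₗ[ℝ] W2)
    (hV0dense : Dense (V0 : Set W0)) (hV1dense : Dense (V1 : Set W1))
    (hgraph0 : IsClosed {p : W0 × W1 | ∃ τ : V0, (τ : W0) = p.1 ∧ d0 τ = p.2})
    (hgraph1 : IsClosed {p : W1 × W2 | ∃ v : V1, (v : W1) = p.1 ∧ d1 v = p.2})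
    (hsub : ∀ τ : V0, d0 τ ∈ V1)
    (hdd : ∀ τ : V0, d1 ⟨d0 τ, hsub τ⟩ = 0)
    (hBclosed : IsClosed (Set.range (⇑d0)))
    (hd1closed : IsClosed (Set.range (⇑d1)))
    -- the nonlinearity: monotone and `V`-Lipschitz
    (F : V1 → W1) (CF : ℝ)
    (hFmono : ∀ v v' : V1, 0 ≤ ⟪F v - F v', (v : W1) - (v' : W1)⟫)
    (hFlip : ∀ v v' : V1, ‖F v - F v'‖ ≤ CF * graphNorm1 d1 (v - v'))
    -- the discrete space and the injective bounded inclusion `i1`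
    {W1h : Type*} [NormedAddCommGroup W1h] [InnerProductSpace ℝ W1h]
    [FiniteDimensional ℝ W1h]
    (i1 : W1h →ₗ[ℝ] W1) (hi1inj : Function.Injective i1)
    (hi1V : ∀ x : W1h, i1 x ∈ V1)
    -- the adjoint `i1*` of `i1`
    (i1s : W1 →ₗ[ℝ] W1h)
    (hi1s : ∀ (w : W1) (x : W1h), ⟪i1s w, x⟫ = ⟪w, i1 x⟫)
    -- `P_{V_h}`: the `V1`-graph-orthogonal projection through `i1`
    (PVh : V1 → W1h)
    (hPVh : ∀ (v : V1) (x : W1h),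
      ⟪(v : W1) - i1 (PVh v), i1 x⟫ +
        ⟪d1 v - d1 ⟨i1 (PVh v), hi1V (PVh v)⟩, d1 ⟨i1 x, hi1V x⟩⟫ = 0)
    -- the bounded linear projection `Pi1`
    (Pi1 : W1 →L[ℝ] W1h) (hPi1 : ∀ x : W1h, Pi1 (i1 x) = x) :
    ∃ C : ℝ, 0 < C ∧ ∀ (f : W1) (σ : V0) (u p : V1),
      IsMixedSemilinearSolution V0 d0 d1 F f σ u p →
      ‖i1s (f - F (u + p)) -
          (Pi1 f - Pi1 (F ⟨i1 (PVh (u + p)), hi1V (PVh (u + p))⟩))‖ ≤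
        C * (‖LinearMap.toContinuousLinearMap (LinearMap.id - i1s ∘ₗ i1)‖ *
               ‖f - F (u + p)‖ +
             (⨅ φ : W1h, ‖(f - F (u + p)) - i1 φ‖) +
             (⨅ v : W1h, graphNorm1 d1 (u - ⟨i1 v, hi1V v⟩)) +
             (⨅ q : W1h, graphNorm1 d1 (p - ⟨i1 q, hi1V q⟩))) := by
  classical
  -- shorthand: the inclusion of `W1h` into `V1`
  set ι : W1h →ₗ[ℝ] V1 := LinearMap.codRestrict V1 i1 hi1V with hιdef
  have hιeq : ∀ x : W1h, (⟨i1 x, hi1V x⟩ : V1) = ι x := fun x => rfl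
  have hιval : ∀ x : W1h, ((ι x : V1) : W1) = i1 x := fun x => rfl
  -- continuity of `i1`
  set i1c := LinearMap.toContinuousLinearMap i1 with hi1c
  set Ci := ‖i1c‖ with hCi
  have hCi0 : 0 ≤ Ci := norm_nonneg _
  have hi1b : ∀ x : W1h, ‖i1 x‖ ≤ Ci * ‖x‖ := by
    intro x
    have := i1c.le_opNorm x
    simpa [hi1c, LinearMap.coe_toContinuousLinearMap'] using this
  -- boundedness of the adjoint `i1s` with the same constant
  have hi1s_b : ∀ w : W1, ‖i1s w‖ ≤ Ci * ‖w‖ := by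
    intro w
    rcases eq_or_ne (i1s w) 0 with h | h
    · simp [h]; positivity
    · have hpos : 0 < ‖i1s w‖ := norm_pos_iff.mpr h
      have h1 : ‖i1s w‖ * ‖i1s w‖ ≤ (Ci * ‖w‖) * ‖i1s w‖ := by
        have h2 : ‖i1s w‖ * ‖i1s w‖ = ⟪w, i1 (i1s w)⟫ := by
          rw [← hi1s w (i1s w), real_inner_self_eq_norm_sq]; ring
        have h3 : ⟪w, i1 (i1s w)⟫ ≤ ‖w‖ * ‖i1 (i1s w)‖ := real_inner_le_norm _ _
        have h4 : ‖i1 (i1s w)‖ ≤ Ci * ‖i1s w‖ := hi1b _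
        nlinarith [norm_nonneg w]
      exact le_of_mul_le_mul_right h1 hpos
  -- `i1` has a bounded left inverse (finite dimensionality)
  set E := LinearEquiv.ofInjective i1 hi1inj with hE
  haveI : FiniteDimensional ℝ (LinearMap.range i1) := E.finiteDimensional
  set Ec := LinearMap.toContinuousLinearMap (E.symm : LinearMap.range i1 →ₗ[ℝ] W1h) with hEc
  set c := ‖Ec‖ with hc
  have hc0 : 0 ≤ c := by rw [hc]; exact norm_nonneg Ec
  have hφb : ∀ φ : W1h, ‖φ‖ ≤ c * ‖i1 φ‖ := by
    intro φ
    have h3 : ‖E φ‖ = ‖i1 φ‖ := by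
      rw [hE, ← Submodule.norm_coe, LinearEquiv.ofInjective_apply]
    rw [hc, ← h3]
    calc ‖φ‖ = ‖E.symm (E φ)‖ := by rw [E.symm_apply_apply]
      _ = ‖Ec (E φ)‖ := by simp [hEc, LinearMap.coe_toContinuousLinearMap']
      _ ≤ ‖Ec‖ * ‖E φ‖ := Ec.le_opNorm (E φ)
  -- the nonconformity norm
  set A := ‖LinearMap.toContinuousLinearMap (LinearMap.id - i1s ∘ₗ i1)‖ with hAdef
  have hA0 : 0 ≤ A := norm_nonneg _
  have hAapp : ∀ φ : W1h,
      (LinearMap.toContinuousLinearMap (LinearMap.id - i1s ∘ₗ i1)) φ = φ - i1s (i1 φ) := by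
    intro φ
    simp [LinearMap.coe_toContinuousLinearMap', LinearMap.sub_apply, LinearMap.comp_apply]
  have hAb : ∀ φ : W1h,
      ‖(LinearMap.toContinuousLinearMap (LinearMap.id - i1s ∘ₗ i1)) φ‖ ≤ A * ‖φ‖ :=
    fun φ => ContinuousLinearMap.le_opNorm _ φ
  have hAle : A ≤ 1 + Ci * Ci := by
    apply ContinuousLinearMap.opNorm_le_bound _ (by positivity)
    intro φ
    rw [hAapp]
    calc ‖φ - i1s (i1 φ)‖ ≤ ‖φ‖ + ‖i1s (i1 φ)‖ := norm_sub_le _ _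
      _ ≤ ‖φ‖ + Ci * (Ci * ‖φ‖) := by
          have h1 : ‖i1s (i1 φ)‖ ≤ Ci * ‖i1 φ‖ := hi1s_b _
          have h2 : ‖i1 φ‖ ≤ Ci * ‖φ‖ := hi1b _
          nlinarith
      _ = (1 + Ci * Ci) * ‖φ‖ := by ring
  -- graph norm facts
  have gn_nonneg : ∀ v : V1, 0 ≤ graphNorm1 d1 v := fun v => Real.sqrt_nonneg _
  have gn_tri : ∀ a b : V1,
      graphNorm1 d1 (a + b) ≤ graphNorm1 d1 a + graphNorm1 d1 b := by
    intro a b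
    unfold graphNorm1
    calc Real.sqrt (‖((a + b : V1) : W1)‖ ^ 2 + ‖d1 (a + b)‖ ^ 2)
        ≤ Real.sqrt ((‖(a : W1)‖ + ‖(b : W1)‖) ^ 2 + (‖d1 a‖ + ‖d1 b‖) ^ 2) := by
          apply Real.sqrt_le_sqrt
          have h1 : ‖((a + b : V1) : W1)‖ ≤ ‖(a : W1)‖ + ‖(b : W1)‖ := by
            rw [Submodule.coe_add]; exact norm_add_le _ _
          have h2 : ‖d1 (a + b)‖ ≤ ‖d1 a‖ + ‖d1 b‖ := by
            rw [map_add]; exact norm_add_le _ _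
          have h1' := pow_le_pow_left₀ (norm_nonneg _) h1 2
          have h2' := pow_le_pow_left₀ (norm_nonneg _) h2 2
          linarith
      _ ≤ Real.sqrt (‖(a : W1)‖ ^ 2 + ‖d1 a‖ ^ 2)
            + Real.sqrt (‖(b : W1)‖ ^ 2 + ‖d1 b‖ ^ 2) :=
          l2_sqrt_triangle _ _ _ _
  -- best-approximation property of `PVh` in the graph norm
  have gn_best : ∀ (w : V1) (x : W1h),
      graphNorm1 d1 (w - ι (PVh w)) ≤ graphNorm1 d1 (w - ι x) := by
    intro w x
    set a := w - ι (PVh w) with ha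
    set b := ι (PVh w) - ι x with hb
    have hab : w - ι x = a + b := by rw [ha, hb]; abel
    have hinner : ⟪(a : W1), (b : W1)⟫ + ⟪d1 a, d1 b⟫ = 0 := by
      have h0 := hPVh w (PVh w - x)
      have hav : (a : W1) = (w : W1) - i1 (PVh w) := by
        rw [ha, Submodule.coe_sub, hιval]
      have had : d1 a = d1 w - d1 (⟨i1 (PVh w), hi1V _⟩ : V1) := by
        rw [ha, map_sub, hιeq]
      have hbv : (b : W1) = i1 (PVh w - x) := by
        rw [hb, Submodule.coe_sub, hιval, hιval, map_sub]
      have hbd : d1 b = d1 (⟨i1 (PVh w - x), hi1V _⟩ : V1) := by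
        rw [hιeq, hb, ← map_sub]
      rw [hav, had, hbv, hbd]
      exact h0
    rw [hab]
    unfold graphNorm1
    apply Real.sqrt_le_sqrt
    have e1 : ‖((a + b : V1) : W1)‖ ^ 2
        = ‖(a : W1)‖ ^ 2 + 2 * ⟪(a : W1), (b : W1)⟫ + ‖(b : W1)‖ ^ 2 := by
      rw [Submodule.coe_add]; exact norm_add_sq_real _ _
    have e2 : ‖d1 (a + b)‖ ^ 2 = ‖d1 a‖ ^ 2 + 2 * ⟪d1 a, d1 b⟫ + ‖d1 b‖ ^ 2 := by
      rw [map_add]; exact norm_add_sq_real _ _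
    nlinarith [sq_nonneg ‖(b : W1)‖, sq_nonneg ‖d1 b‖]
  -- constants
  set CPi := ‖Pi1‖ with hCPi
  have hCPi0 : 0 ≤ CPi := norm_nonneg _
  set CF' := max CF 0 with hCF'
  have hCF'0 : 0 ≤ CF' := le_max_right _ _
  have hCFle : CF ≤ CF' := le_max_left _ _
  set K1 := Ci + CPi + (1 + Ci * Ci) * c with hK1
  have hK10 : 0 ≤ K1 := by positivity
  refine ⟨1 + K1 + c + CPi * CF', by positivity, ?_⟩
  set C := 1 + K1 + c + CPi * CF' with hC
  have hCpos : (0:ℝ) < C := by rw [hC]; positivity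
  intro f σ u p hsol
  set g := f - F (u + p) with hg
  simp only [hιeq]
  set wh : V1 := ι (PVh (u + p)) with hwh
  -- the main pointwise estimate
  have key : ∀ φ v q : W1h,
      ‖i1s g - (Pi1 f - Pi1 (F wh))‖ ≤
        C * (A * ‖g‖) + C * ‖g - i1 φ‖ + C * graphNorm1 d1 (u - ι v)
          + C * graphNorm1 d1 (p - ι q) := by
    intro φ v q
    set B := ‖g - i1 φ‖ with hB
    have hB0 : 0 ≤ B := norm_nonneg _
    set Gv := graphNorm1 d1 (u - ι v) with hGv
    have hGv0 : 0 ≤ Gv := gn_nonneg _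
    set Gq := graphNorm1 d1 (p - ι q) with hGq
    have hGq0 : 0 ≤ Gq := gn_nonneg _
    have hG0 : 0 ≤ ‖g‖ := norm_nonneg _
    -- splitting identity
    have hsplit : i1s g - (Pi1 f - Pi1 (F wh)) =
        (i1s (g - i1 φ) - Pi1 (g - i1 φ)
          - (LinearMap.toContinuousLinearMap (LinearMap.id - i1s ∘ₗ i1)) φ)
          - Pi1 (F (u + p) - F wh) := by
      rw [hAapp]
      simp only [hg, map_sub, hPi1]
      abel
    -- the Lipschitz bound on the nonlinear part
    have hFbound : ‖F (u + p) - F wh‖ ≤ CF' * (Gv + Gq) := by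
      have h1 : ‖F (u + p) - F wh‖ ≤ CF * graphNorm1 d1 ((u + p) - wh) :=
        hFlip _ _
      have h2 : graphNorm1 d1 ((u + p) - wh) ≤ Gv + Gq := by
        have h3 : graphNorm1 d1 ((u + p) - wh) ≤ graphNorm1 d1 ((u + p) - ι (v + q)) := by
          rw [hwh]; exact gn_best (u + p) (v + q)
        have h4 : (u + p) - ι (v + q) = (u - ι v) + (p - ι q) := by
          rw [map_add]; abel
        rw [h4] at h3
        exact h3.trans (gn_tri _ _)
      calc ‖F (u + p) - F wh‖ ≤ CF * graphNorm1 d1 ((u + p) - wh) := h1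
        _ ≤ CF' * graphNorm1 d1 ((u + p) - wh) :=
            mul_le_mul_of_nonneg_right hCFle (gn_nonneg _)
        _ ≤ CF' * (Gv + Gq) := mul_le_mul_of_nonneg_left h2 hCF'0
    -- the bound on `‖φ‖`
    have hφ2 : ‖φ‖ ≤ c * (‖g‖ + B) := by
      have h1 : ‖i1 φ‖ ≤ ‖g‖ + B := by
        have h2 : i1 φ = g - (g - i1 φ) := by abel
        rw [h2, hB]
        exact norm_sub_le _ _
      calc ‖φ‖ ≤ c * ‖i1 φ‖ := hφb φ
        _ ≤ c * (‖g‖ + B) := mul_le_mul_of_nonneg_left h1 hc0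
    -- assemble
    have main : ‖i1s g - (Pi1 f - Pi1 (F wh))‖ ≤
        Ci * B + CPi * B + A * (c * (‖g‖ + B)) + CPi * (CF' * (Gv + Gq)) := by
      rw [hsplit]
      have t1 : ‖i1s (g - i1 φ)‖ ≤ Ci * B := hi1s_b _
      have t2 : ‖Pi1 (g - i1 φ)‖ ≤ CPi * B := Pi1.le_opNorm _
      have t3 : ‖(LinearMap.toContinuousLinearMap (LinearMap.id - i1s ∘ₗ i1)) φ‖
          ≤ A * (c * (‖g‖ + B)) := by
        calc ‖(LinearMap.toContinuousLinearMap (LinearMap.id - i1s ∘ₗ i1)) φ‖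
            ≤ A * ‖φ‖ := hAb φ
          _ ≤ A * (c * (‖g‖ + B)) := mul_le_mul_of_nonneg_left hφ2 hA0
      have t4 : ‖Pi1 (F (u + p) - F wh)‖ ≤ CPi * (CF' * (Gv + Gq)) := by
        calc ‖Pi1 (F (u + p) - F wh)‖ ≤ CPi * ‖F (u + p) - F wh‖ := Pi1.le_opNorm _
          _ ≤ CPi * (CF' * (Gv + Gq)) := mul_le_mul_of_nonneg_left hFbound hCPi0
      calc ‖(i1s (g - i1 φ) - Pi1 (g - i1 φ)
              - (LinearMap.toContinuousLinearMap (LinearMap.id - i1s ∘ₗ i1)) φ)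
              - Pi1 (F (u + p) - F wh)‖
          ≤ ‖i1s (g - i1 φ) - Pi1 (g - i1 φ)
              - (LinearMap.toContinuousLinearMap (LinearMap.id - i1s ∘ₗ i1)) φ‖
            + ‖Pi1 (F (u + p) - F wh)‖ := norm_sub_le _ _
        _ ≤ (‖i1s (g - i1 φ) - Pi1 (g - i1 φ)‖
              + ‖(LinearMap.toContinuousLinearMap (LinearMap.id - i1s ∘ₗ i1)) φ‖)
            + ‖Pi1 (F (u + p) - F wh)‖ := by
              have := norm_sub_le (i1s (g - i1 φ) - Pi1 (g - i1 φ))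
                ((LinearMap.toContinuousLinearMap (LinearMap.id - i1s ∘ₗ i1)) φ)
              linarith
        _ ≤ ((‖i1s (g - i1 φ)‖ + ‖Pi1 (g - i1 φ)‖)
              + ‖(LinearMap.toContinuousLinearMap (LinearMap.id - i1s ∘ₗ i1)) φ‖)
            + ‖Pi1 (F (u + p) - F wh)‖ := by
              have := norm_sub_le (i1s (g - i1 φ)) (Pi1 (g - i1 φ))
              linarith
        _ ≤ Ci * B + CPi * B + A * (c * (‖g‖ + B)) + CPi * (CF' * (Gv + Gq)) := by
              linarith
    -- compare coefficients with `C`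
    have hAc : A * c ≤ (1 + Ci * Ci) * c := mul_le_mul_of_nonneg_right hAle hc0
    have hcoef1 : Ci + CPi + A * c ≤ C := by
      rw [hC, hK1]
      linarith [hAc, hc0, mul_nonneg hCPi0 hCF'0]
    have hcoef2 : c ≤ C := by
      rw [hC]
      linarith [hK10, mul_nonneg hCPi0 hCF'0]
    have hcoef3 : CPi * CF' ≤ C := by
      rw [hC]; linarith [hK10, hc0]
    have e1 : A * (c * (‖g‖ + B)) = (A * c) * ‖g‖ + (A * c) * B := by ring
    have h1 : (A * c) * ‖g‖ ≤ C * (A * ‖g‖) := by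
      have : (A * c) * ‖g‖ = c * (A * ‖g‖) := by ring
      rw [this]
      exact mul_le_mul_of_nonneg_right hcoef2 (mul_nonneg hA0 hG0)
    have h2 : (Ci + CPi + A * c) * B ≤ C * B := mul_le_mul_of_nonneg_right hcoef1 hB0
    have h3 : (CPi * CF') * Gv ≤ C * Gv := mul_le_mul_of_nonneg_right hcoef3 hGv0
    have h4 : (CPi * CF') * Gq ≤ C * Gq := mul_le_mul_of_nonneg_right hcoef3 hGq0
    linarith [main, h1, h2, h3, h4]
  -- pass to the infima
  set L := ‖i1s g - (Pi1 f - Pi1 (F wh))‖ with hL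
  set S := A * ‖g‖ with hS
  have hdiv : ∀ φ v q : W1h, L / C ≤ S + ‖g - i1 φ‖
      + graphNorm1 d1 (u - ι v) + graphNorm1 d1 (p - ι q) := by
    intro φ v q
    rw [div_le_iff₀ hCpos]
    calc L ≤ C * S + C * ‖g - i1 φ‖ + C * graphNorm1 d1 (u - ι v)
          + C * graphNorm1 d1 (p - ι q) := key φ v q
      _ = (S + ‖g - i1 φ‖ + graphNorm1 d1 (u - ι v)
          + graphNorm1 d1 (p - ι q)) * C := by ring
  have s1 : ∀ v q : W1h,
      L / C - S - graphNorm1 d1 (u - ι v) - graphNorm1 d1 (p - ι q)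
        ≤ ⨅ φ : W1h, ‖g - i1 φ‖ :=
    fun v q => le_ciInf (fun φ => by linarith [hdiv φ v q])
  have s2 : ∀ q : W1h,
      L / C - S - (⨅ φ : W1h, ‖g - i1 φ‖) - graphNorm1 d1 (p - ι q)
        ≤ ⨅ v : W1h, graphNorm1 d1 (u - ι v) :=
    fun q => le_ciInf (fun v => by linarith [s1 v q])
  have s3 : L / C - S - (⨅ φ : W1h, ‖g - i1 φ‖)
        - (⨅ v : W1h, graphNorm1 d1 (u - ι v))
        ≤ ⨅ q : W1h, graphNorm1 d1 (p - ι q) :=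
    le_ciInf (fun q => by linarith [s2 q])
  have final : L ≤ C * (S + (⨅ φ : W1h, ‖g - i1 φ‖)
      + (⨅ v : W1h, graphNorm1 d1 (u - ι v))
      + (⨅ q : W1h, graphNorm1 d1 (p - ι q))) := by
    rw [mul_comm, ← div_le_iff₀ hCpos]
    linarith [s3]
  exact final

end
end

section
/- Consider a closed Hilbert complex segment (W0, W1, W2, d0, d1, V0, V1) with harmonic space H and graph norms ‖·‖_{V0}, ‖·‖_{V1}. Let F : V1 → W1 be monotone (⟨F v − F v', v − v'⟩ ≥ 0 for all v, v' ∈ V1) and hemicontinuous (for all u, v ∈ V1 and w ∈ W1, t ↦ ⟨F(u + t v), w⟩ is continuous on [0,1]). Suppose (σ, u, p) ∈ V0 × V1 × H solves the mixed semilinear problem with datum f ∈ W1, and suppose F is locally Lipschitz at u + p with respect to the V-norm: there exist constants C_F, M > 0 such that ‖F(u + p) − F v'‖ ≤ C_F ‖(u + p) − v'‖_{V1} whenever v' ∈ V1 satisfies ‖(u + p) − v'‖_{V1} ≤ M. Then there exist δ > 0 and C > 0 such that for every f' ∈ W1 with ‖f − f'‖ ≤ δ, any solution (σ', u', p') ∈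 V0 × V1 × H of the mixed semilinear problem with datum f' satisfies ‖σ − σ'‖_{V0} + ‖u − u'‖_{V1} + ‖p − p'‖ ≤ C ‖f − f'‖. -/
open scoped RealInnerProductSpace


lemma le_of_sq_le_mul {x y : ℝ} (hx : 0 ≤ x) (hy : 0 ≤ y) (h : x^2 ≤ x*y) : x ≤ y := by
  rcases hx.eq_or_lt with h0 | h0
  · rw [← h0]; exact hy
  · have := (mul_le_mul_iff_right₀ h0).mp (by nlinarith : x*x ≤ x*y)
    exact this

lemma three_sq_ineq (a b c : ℝ) : (a + b + c)^2 ≤ 3 * (a^2 + b^2 + c^2) := by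
  nlinarith [sq_nonneg (a - b), sq_nonneg (b - c), sq_nonneg (a - c)]

lemma sqrt_sq_add_sq_le (a b : ℝ) (ha : 0 ≤ a) (hb : 0 ≤ b) :
    Real.sqrt (a^2 + b^2) ≤ a + b := by
  have h : a^2 + b^2 ≤ (a+b)^2 := by nlinarith
  calc Real.sqrt (a^2+b^2) ≤ Real.sqrt ((a+b)^2) := Real.sqrt_le_sqrt h
    _ = a + b := Real.sqrt_sq (by linarith)


lemma graph_open_mapping {E F : Type*}
    [NormedAddCommGroup E] [InnerProductSpace ℝ E] [CompleteSpace E]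
    [NormedAddCommGroup F] [InnerProductSpace ℝ F] [CompleteSpace F]
    (V : Submodule ℝ E) (d : V →ₗ[ℝ] F)
    (hgraph : IsClosed {p : E × F | ∃ τ : V, (τ : E) = p.1 ∧ d τ = p.2})
    (hrange : IsClosed (Set.range ⇑d)) :
    ∃ c : ℝ, 0 < c ∧ ∀ y ∈ Set.range ⇑d, ∃ τ : V, d τ = y ∧ ‖(τ : E)‖ ≤ c * ‖y‖ := by
  set G : Submodule ℝ (E × F) := LinearMap.range (V.subtype.prod d) with hG
  have hGset : (G : Set (E × F)) = {p : E × F | ∃ τ : V, (τ : E) = p.1 ∧ d τ = p.2} := by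
    ext ⟨x, y⟩
    simp only [hG, SetLike.mem_coe, LinearMap.mem_range, LinearMap.prod_apply, Function.prod,
      Prod.mk.injEq, Set.mem_setOf_eq, Submodule.coe_subtype]
  have hGclosed : IsClosed (G : Set (E × F)) := hGset ▸ hgraph
  set R : Submodule ℝ F := LinearMap.range d with hR
  have hRclosed : IsClosed (R : Set F) := by
    have : (R : Set F) = Set.range ⇑d := LinearMap.coe_range d
    rw [this]; exact hrange
  haveI : CompleteSpace G := hGclosed.completeSpace_coe
  haveI : CompleteSpace R := hRclosed.completeSpace_coe
  -- the projection G → R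
  have hmem : ∀ g : G, (g : E × F).2 ∈ R := by
    rintro ⟨g, hg⟩
    obtain ⟨τ, hτ⟩ := hg
    exact ⟨τ, congrArg Prod.snd hτ⟩
  let π₀ : G →ₗ[ℝ] R :=
    { toFun := fun g => ⟨(g : E × F).2, hmem g⟩
      map_add' := by intro a b; ext; simp
      map_smul' := by intro c a; ext; simp }
  have hπ₀ : ∀ g : G, ‖π₀ g‖ ≤ 1 * ‖g‖ := by
    intro g
    rw [one_mul]; exact norm_snd_le (g : E × F)
  let π : G →L[ℝ] R := π₀.mkContinuous 1 hπ₀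
  have hsurj : Function.Surjective π := by
    rintro ⟨y, hy⟩
    obtain ⟨τ, hτ⟩ := hy
    refine ⟨⟨((τ : E), d τ), ⟨τ, rfl⟩⟩, ?_⟩
    ext; exact hτ
  obtain ⟨C, hC, h⟩ := π.exists_preimage_norm_le hsurj
  refine ⟨C, hC, ?_⟩
  rintro y ⟨τ', rfl⟩
  obtain ⟨x, hx, hxn⟩ := h ⟨d τ', ⟨τ', rfl⟩⟩
  obtain ⟨τ, hτ⟩ := x.2
  refine ⟨τ, ?_, ?_⟩
  · have h2 : (x : E × F).2 = d τ' := congrArg Subtype.val hx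
    have : d τ = (x : E × F).2 := congrArg Prod.snd hτ
    rw [this, h2]
  · have h1 : (τ : E) = (x : E × F).1 := congrArg Prod.fst hτ
    calc ‖(τ : E)‖ = ‖(x : E × F).1‖ := by rw [h1]
      _ ≤ ‖(x : E × F)‖ := norm_fst_le _
      _ = ‖x‖ := rfl
      _ ≤ C * ‖(⟨d τ', ⟨τ', rfl⟩⟩ : R)‖ := hxn
      _ = C * ‖d τ'‖ := rfl


section

variable {W0 W1 W2 : Type*}
  [NormedAddCommGroup W0] [InnerProductSpace ℝ W0] [CompleteSpace W0]
  [NormedAddCommGroup W1] [InnerProductSpace ℝ W1] [CompleteSpace W1]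
  [NormedAddCommGroup W2] [InnerProductSpace ℝ W2] [CompleteSpace W2]

/-- The graph (V-)norm `‖τ‖_{V0} = (‖τ‖² + ‖d0 τ‖²)^{1/2}` on the domain of `d0`. -/
noncomputable def graphNorm0 {V0 : Submodule ℝ W0} (d0 : V0 →ₗ[ℝ] W1) (τ : V0) : ℝ :=
  Real.sqrt (‖(τ : W0)‖ ^ 2 + ‖d0 τ‖ ^ 2)

/-- **Local well-posedness of the mixed semilinear problem under a local Lipschitz
condition** (Section 4.5 of the paper): if `F` is monotone, hemicontinuous, and
locally Lipschitz at the solution `u + p` with respect to the `V`-norm, then for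
all data `f'` sufficiently close to `f`, any solution of the mixed semilinear
problem with datum `f'` satisfies the Lipschitz stability estimate. -/
theorem mixed_semilinear_local_lipschitz_stability
    (V0 : Submodule ℝ W0) (V1 : Submodule ℝ W1)
    (d0 : V0 →ₗ[ℝ] W1) (d1 : V1 →ₗ[ℝ] W2)
    (hV0dense : Dense (V0 : Set W0)) (hV1dense : Dense (V1 : Set W1))
    (hgraph0 : IsClosed {p : W0 × W1 | ∃ τ : V0, (τ : W0) = p.1 ∧ d0 τ = p.2})
    (hgraph1 : IsClosed {p : W1 × W2 | ∃ v : V1, (v : W1) = p.1 ∧ d1 v = p.2})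
    (hsub : ∀ τ : V0, d0 τ ∈ V1)
    (hdd : ∀ τ : V0, d1 ⟨d0 τ, hsub τ⟩ = 0)
    (hBclosed : IsClosed (Set.range (⇑d0)))
    (hd1closed : IsClosed (Set.range (⇑d1)))
    -- the nonlinearity: monotone and hemicontinuous
    (F : V1 → W1)
    (hFmono : ∀ v v' : V1, 0 ≤ ⟪F v - F v', (v : W1) - (v' : W1)⟫)
    (hFhemi : ∀ u v : V1, ∀ w : W1,
      ContinuousOn (fun t : ℝ => ⟪F (u + t • v), w⟫) (Set.Icc 0 1))
    -- a solution with datum `f`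
    (f : W1) (σ : V0) (u p : V1)
    (hsol : IsMixedSemilinearSolution V0 d0 d1 F f σ u p)
    -- `F` is locally Lipschitz at `u + p` in the `V`-norm
    (CF M : ℝ) (hCF : 0 < CF) (hM : 0 < M)
    (hFloc : ∀ v' : V1, graphNorm1 d1 (u + p - v') ≤ M →
      ‖F (u + p) - F v'‖ ≤ CF * graphNorm1 d1 (u + p - v')) :
    ∃ δ C : ℝ, 0 < δ ∧ 0 < C ∧
      ∀ (f' : W1) (σ' : V0) (u' p' : V1), ‖f - f'‖ ≤ δ →
        IsMixedSemilinearSolution V0 d0 d1 F f' σ' u' p' →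
        graphNorm0 d0 (σ - σ') + graphNorm1 d1 (u - u') + ‖((p - p' : V1) : W1)‖ ≤
          C * ‖f - f'‖ := by
  classical
  obtain ⟨c0, hc0, hP0⟩ := graph_open_mapping V0 d0 hgraph0 hBclosed
  obtain ⟨c1, hc1, hP1⟩ := graph_open_mapping V1 d1 hgraph1 hd1closed
  set K : ℝ := max (max c0 c1) 1 with hKdef
  have hK1 : (1:ℝ) ≤ K := le_max_right _ _
  have hKc0 : c0 ≤ K := le_trans (le_max_left _ _) (le_max_left _ _)
  have hKc1 : c1 ≤ K := le_trans (le_max_right _ _) (le_max_left _ _)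
  have hK0 : (0:ℝ) < K := lt_of_lt_of_le one_pos hK1
  set K2 : ℝ := 3*K^2 + 6*K with hK2def
  have hK2 : (0:ℝ) < K2 := by positivity
  refine ⟨M / K2, 3*K + (1 + CF*K2) + (3*K^2 + 3*K) + 3*K, by positivity, by positivity, ?_⟩
  intro f' σ' u' p' hδ hsol'
  obtain ⟨hpH, heq1, heq2, heq3⟩ := hsol
  obtain ⟨hpH', heq1', heq2', heq3'⟩ := hsol'
  set ε : ℝ := ‖f - f'‖ with hεdef
  have hε0 : 0 ≤ ε := norm_nonneg _
  set eσ : V0 := σ - σ' with heσdef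
  set eu : V1 := u - u' with heudef
  set ep : V1 := p - p' with hepdef
  -- basic difference identities
  have hdiff1 : ∀ τ : V0, ⟪((eu : V1) : W1), d0 τ⟫ = ⟪((eσ : V0) : W0), (τ : W0)⟫ := by
    intro τ
    have a := heq1 τ; have b := heq1' τ
    simp only [heσdef, heudef, Submodule.coe_sub, inner_sub_left]
    linarith
  have hdiff2 : ∀ v : V1, ⟪d0 eσ, (v : W1)⟫ + ⟪d1 eu, d1 v⟫ + ⟪((ep : V1) : W1), (v : W1)⟫
      + ⟪F (u + p) - F (u' + p'), (v : W1)⟫ = ⟪f - f', (v : W1)⟫ := by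
    intro v
    have a := heq2 v; have b := heq2' v
    simp only [heσdef, heudef, hepdef, map_sub, Submodule.coe_sub, inner_sub_left]
    linarith
  have hepH : IsHarmonic V0 d0 d1 ep := by
    refine ⟨?_, fun τ => ?_⟩
    · simp [hepdef, map_sub, hpH.1, hpH'.1]
    · simp [hepdef, Submodule.coe_sub, inner_sub_left, hpH.2 τ, hpH'.2 τ]
  have heuH : ∀ q : V1, IsHarmonic V0 d0 d1 q → ⟪((eu : V1) : W1), (q : W1)⟫ = 0 := by
    intro q hq
    simp [heudef, Submodule.coe_sub, inner_sub_left, heq3 q hq, heq3' q hq]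
  -- Step 1: energy estimate
  have hE : ‖((eσ : V0) : W0)‖^2 + ‖d1 eu‖^2 + ‖((ep : V1) : W1)‖^2
      ≤ ε * (‖((eu : V1) : W1)‖ + ‖((ep : V1) : W1)‖) := by
    have hv := hdiff2 (eu + ep)
    have hd1sum : d1 (eu + ep) = d1 eu := by rw [map_add, hepH.1, add_zero]
    have hcsum : ((eu + ep : V1) : W1) = (eu : W1) + (ep : W1) := rfl
    have h1 : ⟪d0 eσ, ((eu : V1) : W1)⟫ = ‖((eσ : V0) : W0)‖^2 := by
      rw [real_inner_comm, hdiff1 eσ, real_inner_self_eq_norm_sq]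
    have h2 : ⟪d0 eσ, ((ep : V1) : W1)⟫ = 0 := by
      rw [real_inner_comm]; exact hepH.2 eσ
    have h3 : ⟪((ep : V1) : W1), ((eu : V1) : W1)⟫ = 0 := by
      rw [real_inner_comm]; exact heuH ep hepH
    have h4 : ⟪((ep : V1) : W1), ((ep : V1) : W1)⟫ = ‖((ep : V1) : W1)‖^2 :=
      real_inner_self_eq_norm_sq _
    have hmono : 0 ≤ ⟪F (u + p) - F (u' + p'), ((eu + ep : V1) : W1)⟫ := by
      have heup : eu + ep = (u + p) - (u' + p') := by rw [heudef, hepdef]; abel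
      rw [heup]
      have := hFmono (u + p) (u' + p')
      rwa [← Submodule.coe_sub] at this
    have hrhs : ⟪f - f', ((eu + ep : V1) : W1)⟫
        ≤ ε * (‖((eu : V1) : W1)‖ + ‖((ep : V1) : W1)‖) := by
      calc ⟪f - f', ((eu + ep : V1) : W1)⟫ ≤ ‖f - f'‖ * ‖((eu + ep : V1) : W1)‖ :=
            real_inner_le_norm _ _
        _ ≤ ε * (‖((eu : V1) : W1)‖ + ‖((ep : V1) : W1)‖) := by
            rw [hεdef]
            exact mul_le_mul_of_nonneg_left (by rw [hcsum]; exact norm_add_le _ _)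
              (norm_nonneg _)
    have e1 : ⟪d0 eσ, ((eu + ep : V1) : W1)⟫ = ‖((eσ : V0) : W0)‖^2 := by
      rw [hcsum, inner_add_right, h1, h2, add_zero]
    have e2 : ⟪d1 eu, d1 (eu + ep)⟫ = ‖d1 eu‖^2 := by
      rw [hd1sum, real_inner_self_eq_norm_sq]
    have e3 : ⟪((ep : V1) : W1), ((eu + ep : V1) : W1)⟫ = ‖((ep : V1) : W1)‖^2 := by
      rw [hcsum, inner_add_right, h3, h4, zero_add]
    linarith [hv, hmono, hrhs, e1, e2, e3]
  -- Step 2: Poincaré-type bound for eu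
  set B : Submodule ℝ W1 := LinearMap.range d0 with hBdef
  have hBc : IsClosed (B : Set W1) := by
    rw [hBdef, LinearMap.coe_range]; exact hBclosed
  haveI : CompleteSpace B := hBc.completeSpace_coe
  have hBV1 : ∀ x : W1, x ∈ B → x ∈ V1 := by
    rintro x ⟨τ, rfl⟩; exact hsub τ
  have hd1B : ∀ (x : W1) (hx : x ∈ B), d1 ⟨x, hBV1 x hx⟩ = 0 := by
    rintro x ⟨τ, rfl⟩; exact hdd τ
  set b : B := B.orthogonalProjectionOnto ((eu : V1) : W1) with hbdef
  set bV : V1 := ⟨(b : W1), hBV1 _ b.2⟩ with hbVdef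
  have hd1bV : d1 bV = 0 := hd1B _ b.2
  set w : V1 := eu - bV with hwdef
  have hw1 : ((w : V1) : W1) = ((eu : V1) : W1) - (b : W1) := rfl
  have hwperp : ∀ x ∈ B, ⟪((w : V1) : W1), x⟫ = 0 := by
    intro x hx
    rw [hw1]
    exact B.starProjection_inner_eq_zero ((eu : V1) : W1) x hx
  have hd1w : d1 w = d1 eu := by rw [hwdef, map_sub, hd1bV, sub_zero]
  obtain ⟨v, hv1, hv2⟩ := hP1 (d1 w) ⟨w, rfl⟩
  set s : V1 := w - v with hsdef
  have hd1s : d1 s = 0 := by rw [hsdef, map_sub, hv1, sub_self]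
  set bs : B := B.orthogonalProjectionOnto ((s : V1) : W1) with hbsdef
  set bsV : V1 := ⟨(bs : W1), hBV1 _ bs.2⟩ with hbsVdef
  have hd1bsV : d1 bsV = 0 := hd1B _ bs.2
  set q : V1 := s - bsV with hqdef
  have hq_coe : ((q : V1) : W1) = ((s : V1) : W1) - (bs : W1) := rfl
  have hqperpB : ∀ x ∈ B, ⟪((q : V1) : W1), x⟫ = 0 := by
    intro x hx
    rw [hq_coe]
    exact B.starProjection_inner_eq_zero ((s : V1) : W1) x hx
  have hq : IsHarmonic V0 d0 d1 q := by
    refine ⟨by rw [hqdef, map_sub, hd1s, hd1bsV, sub_self], fun τ => hqperpB (d0 τ) ⟨τ, rfl⟩⟩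
  have hwq : ⟪((w : V1) : W1), ((q : V1) : W1)⟫ = 0 := by
    have h1 : ⟪((eu : V1) : W1), ((q : V1) : W1)⟫ = 0 := heuH q hq
    have h2 : ⟪(b : W1), ((q : V1) : W1)⟫ = 0 := by
      rw [real_inner_comm]; exact hqperpB (b : W1) b.2
    rw [hw1, inner_sub_left, h1, h2, sub_zero]
  have hws : ⟪((w : V1) : W1), ((s : V1) : W1)⟫ = 0 := by
    have hs_coe : ((s : V1) : W1) = (bs : W1) + ((q : V1) : W1) := by
      rw [hq_coe]; abel
    rw [hs_coe, inner_add_right, hwperp (bs : W1) bs.2, hwq, add_zero]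
  have hwnorm : ‖((w : V1) : W1)‖ ≤ c1 * ‖d1 eu‖ := by
    have hs2 : ((s : V1) : W1) = ((w : V1) : W1) - ((v : V1) : W1) := rfl
    have hwv : ‖((w : V1) : W1)‖^2 = ⟪((w : V1) : W1), ((v : V1) : W1)⟫ := by
      have := hws
      rw [hs2, inner_sub_right] at this
      rw [← real_inner_self_eq_norm_sq]
      linarith
    refine le_of_sq_le_mul (norm_nonneg _) (by positivity) ?_
    calc ‖((w : V1) : W1)‖^2 = ⟪((w : V1) : W1), ((v : V1) : W1)⟫ := hwv
      _ ≤ ‖((w : V1) : W1)‖ * ‖((v : V1) : W1)‖ := real_inner_le_norm _ _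
      _ ≤ ‖((w : V1) : W1)‖ * (c1 * ‖d1 eu‖) := by
          refine mul_le_mul_of_nonneg_left ?_ (norm_nonneg _)
          rw [← hd1w]; exact hv2
  have hbnorm : ‖(b : W1)‖ ≤ c0 * ‖((eσ : V0) : W0)‖ := by
    obtain ⟨τ, hτa, hτb⟩ := hP0 (b : W1) (by
      obtain ⟨τ₀, hτ₀⟩ := b.2
      exact ⟨τ₀, hτ₀⟩)
    have heub : ⟪((eu : V1) : W1), (b : W1)⟫ = ⟪((eσ : V0) : W0), (τ : W0)⟫ := by
      rw [← hτa]; exact hdiff1 τ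
    have hwb : ⟪((w : V1) : W1), (b : W1)⟫ = 0 := hwperp (b : W1) b.2
    refine le_of_sq_le_mul (norm_nonneg _) (by positivity) ?_
    have hbb : ‖(b : W1)‖^2 = ⟪((eu : V1) : W1), (b : W1)⟫ := by
      have : ⟪((eu : V1) : W1) - ((w : V1) : W1), (b : W1)⟫ = ‖(b : W1)‖^2 := by
        have hcoe : ((eu : V1) : W1) - ((w : V1) : W1) = (b : W1) := by
          rw [hw1]; abel
        rw [hcoe, real_inner_self_eq_norm_sq]
      rw [inner_sub_left, hwb, sub_zero] at this
      linarith
    calc ‖(b : W1)‖^2 = ⟪((eσ : V0) : W0), (τ : W0)⟫ := by rw [hbb, heub]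
      _ ≤ ‖((eσ : V0) : W0)‖ * ‖(τ : W0)‖ := real_inner_le_norm _ _
      _ ≤ ‖((eσ : V0) : W0)‖ * (c0 * ‖(b : W1)‖) :=
          mul_le_mul_of_nonneg_left hτb (norm_nonneg _)
      _ = ‖(b : W1)‖ * (c0 * ‖((eσ : V0) : W0)‖) := by ring
  have heu_bound : ‖((eu : V1) : W1)‖ ≤ c0 * ‖((eσ : V0) : W0)‖ + c1 * ‖d1 eu‖ := by
    have hcoe : ((eu : V1) : W1) = ((w : V1) : W1) + (b : W1) := by rw [hw1]; abel
    calc ‖((eu : V1) : W1)‖ ≤ ‖((w : V1) : W1)‖ + ‖(b : W1)‖ := by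
          rw [hcoe]; exact norm_add_le _ _
      _ ≤ c0 * ‖((eσ : V0) : W0)‖ + c1 * ‖d1 eu‖ := by linarith
  clear_value q bsV bs s w bV b
  clear hq_coe hw1 hbdef hbVdef hwdef hsdef hbsdef hbsVdef hqdef
  -- Step 3: smallness and individual bounds
  set A : ℝ := ‖((eσ : V0) : W0)‖ with hAdef
  set D : ℝ := ‖d1 eu‖ with hDdef
  set P : ℝ := ‖((ep : V1) : W1)‖ with hPdef
  have hA0 : 0 ≤ A := norm_nonneg _
  have hD0 : 0 ≤ D := norm_nonneg _
  have hP0' : 0 ≤ P := norm_nonneg _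
  clear_value A D P
  have hT : A + D + P ≤ 3 * K * ε := by
    refine le_of_sq_le_mul (by linarith) (mul_nonneg (by linarith) hε0) ?_
    have h1 : (A + D + P)^2 ≤ 3 * (A^2 + D^2 + P^2) := three_sq_ineq A D P
    have h2 : A^2 + D^2 + P^2 ≤ ε * (c0 * A + c1 * D + P) := by
      have := hE
      have h3 : ‖((eu : V1) : W1)‖ + P ≤ c0 * A + c1 * D + P := by linarith [heu_bound]
      calc A^2 + D^2 + P^2 ≤ ε * (‖((eu : V1) : W1)‖ + P) := hE
        _ ≤ ε * (c0 * A + c1 * D + P) := mul_le_mul_of_nonneg_left h3 hε0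
    have h4 : c0 * A + c1 * D + P ≤ K * (A + D + P) := by
      have ha := mul_le_mul_of_nonneg_right hKc0 hA0
      have hd := mul_le_mul_of_nonneg_right hKc1 hD0
      have hp : 1 * P ≤ K * P := mul_le_mul_of_nonneg_right hK1 hP0'
      have hdistrib : K * (A + D + P) = K * A + K * D + K * P := by ring
      rw [hdistrib]; linarith
    calc (A + D + P)^2 ≤ 3 * (A^2 + D^2 + P^2) := h1
      _ ≤ 3 * (ε * (K * (A + D + P))) := by
          linarith [h2, mul_le_mul_of_nonneg_left h4 hε0]
      _ = (A + D + P) * (3 * K * ε) := by ring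
  have hAb : A ≤ 3 * K * ε := by linarith
  have hDb : D ≤ 3 * K * ε := by linarith
  have hPb : P ≤ 3 * K * ε := by linarith
  have heub2 : ‖((eu : V1) : W1)‖ ≤ 3 * K^2 * ε := by
    calc ‖((eu : V1) : W1)‖ ≤ c0 * A + c1 * D := heu_bound
      _ ≤ K * (A + D) := by
          have ha := mul_le_mul_of_nonneg_right hKc0 hA0
          have hd := mul_le_mul_of_nonneg_right hKc1 hD0
          have : K * (A + D) = K * A + K * D := by ring
          rw [this]; linarith
      _ ≤ K * (3 * K * ε) := by
          refine mul_le_mul_of_nonneg_left ?_ hK0.le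
          linarith
      _ = 3 * K^2 * ε := by ring
  have heup : u + p - (u' + p') = eu + ep := by rw [heudef, hepdef]; abel
  have hgn : graphNorm1 d1 (u + p - (u' + p')) ≤ K2 * ε := by
    rw [heup]
    have hd1sum : d1 (eu + ep) = d1 eu := by rw [map_add, hepH.1, add_zero]
    have hle : graphNorm1 d1 (eu + ep) ≤ ‖((eu + ep : V1) : W1)‖ + ‖d1 (eu + ep)‖ :=
      sqrt_sq_add_sq_le _ _ (norm_nonneg _) (norm_nonneg _)
    have hc : ‖((eu + ep : V1) : W1)‖ ≤ ‖((eu : V1) : W1)‖ + P := by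
      rw [hPdef, Submodule.coe_add]; exact norm_add_le _ _
    rw [hd1sum] at hle
    calc graphNorm1 d1 (eu + ep) ≤ ‖((eu : V1) : W1)‖ + P + D := by linarith
      _ ≤ 3 * K^2 * ε + 3 * K * ε + 3 * K * ε := by linarith
      _ = K2 * ε := by rw [hK2def]; ring
  have hsmall : graphNorm1 d1 (u + p - (u' + p')) ≤ M := by
    have : K2 * ε ≤ K2 * (M / K2) := mul_le_mul_of_nonneg_left hδ hK2.le
    rw [mul_div_cancel₀ M (ne_of_gt hK2)] at this
    linarith
  have hF : ‖F (u + p) - F (u' + p')‖ ≤ CF * (K2 * ε) := by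
    calc ‖F (u + p) - F (u' + p')‖ ≤ CF * graphNorm1 d1 (u + p - (u' + p')) :=
          hFloc (u' + p') hsmall
      _ ≤ CF * (K2 * ε) := mul_le_mul_of_nonneg_left hgn hCF.le
  -- Step 4: bound on d0 eσ
  have hd0b : ‖d0 eσ‖ ≤ (1 + CF * K2) * ε := by
    have hv := hdiff2 ⟨d0 eσ, hsub eσ⟩
    have hcoe : ((⟨d0 eσ, hsub eσ⟩ : V1) : W1) = d0 eσ := rfl
    have hd1z : d1 (⟨d0 eσ, hsub eσ⟩ : V1) = 0 := hdd eσ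
    have hepz : ⟪((ep : V1) : W1), d0 eσ⟫ = 0 := hepH.2 eσ
    rw [hcoe, hd1z, inner_zero_right, hepz] at hv
    refine le_of_sq_le_mul (norm_nonneg _) (by positivity) ?_
    have h1 : ⟪f - f', d0 eσ⟫ ≤ ε * ‖d0 eσ‖ := real_inner_le_norm _ _
    have h2 : -(CF * (K2 * ε)) * ‖d0 eσ‖ ≤ ⟪F (u + p) - F (u' + p'), d0 eσ⟫ := by
      have habs := abs_real_inner_le_norm (F (u + p) - F (u' + p')) (d0 eσ)
      have hb : ‖F (u + p) - F (u' + p')‖ * ‖d0 eσ‖ ≤ CF * (K2 * ε) * ‖d0 eσ‖ :=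
        mul_le_mul_of_nonneg_right hF (norm_nonneg _)
      have hna := neg_abs_le ⟪F (u + p) - F (u' + p'), d0 eσ⟫
      linarith
    have h3 : ⟪d0 eσ, d0 eσ⟫ = ‖d0 eσ‖^2 := real_inner_self_eq_norm_sq _
    have hfin : ‖d0 eσ‖^2 ≤ ε * ‖d0 eσ‖ + CF * (K2 * ε) * ‖d0 eσ‖ := by linarith
    calc ‖d0 eσ‖^2 ≤ ε * ‖d0 eσ‖ + CF * (K2 * ε) * ‖d0 eσ‖ := hfin
      _ = ‖d0 eσ‖ * ((1 + CF * K2) * ε) := by ring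
  -- Step 5: conclusion
  have hgn0 : graphNorm0 d0 eσ ≤ A + ‖d0 eσ‖ := by
    rw [hAdef]; exact sqrt_sq_add_sq_le _ _ (norm_nonneg _) (norm_nonneg _)
  have hgn1 : graphNorm1 d1 eu ≤ ‖((eu : V1) : W1)‖ + D := by
    rw [hDdef]; exact sqrt_sq_add_sq_le _ _ (norm_nonneg _) (norm_nonneg _)
  calc graphNorm0 d0 eσ + graphNorm1 d1 eu + P
      ≤ (A + ‖d0 eσ‖) + (‖((eu : V1) : W1)‖ + D) + P := by linarith
    _ ≤ (3*K*ε + (1 + CF*K2)*ε) + (3*K^2*ε + 3*K*ε) + 3*K*ε := by linarith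
    _ = (3*K + (1 + CF*K2) + (3*K^2 + 3*K) + 3*K) * ε := by ring


end
end
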